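/- Let $h:[n]\to[n]$ be a Hessenberg function whose attacking graph $G$ (edges $\{i,j\}$ with $i < j \le h(i)$) is the incomparability graph of a natural unit interval order, and let $w \in \mathbb{Z}_{>0}^n$. Define a new graph $G'$ on $[n]$ by keeping only the edges $\{i,j\}$ of $G$ with $w_i = w_j$. Then $G'$ is again the incomparability graph of a natural unit interval order; equivalently, the complement poset of $G'$ (with the natural labeling) is $(2+2)$-free and $(3+1)$-free. -/

import Mathlib

/-- Lexicographic comparison via the key `a*n+x`. -/
lemma lexKey {n a b x y : ℕ} (hx : x < n) (hy : y < n) :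
    a * n + x < b * n + y ↔ a < b ∨ (a = b ∧ x < y) := by
  constructor
  · intro hlt
    rcases lt_trichotomy a b with h1 | h1 | h1
    · exact Or.inl h1
    · subst h1; right; exact ⟨rfl, by omega⟩
    · exfalso
      have : b * n + y < a * n + x := by
        calc b * n + y < b * n + n := by omega
          _ = (b + 1) * n := by ring
          _ ≤ a * n := Nat.mul_le_mul_right n h1
          _ ≤ a * n + x := Nat.le_add_right _ _
      omega
  · rintro (h1 | ⟨rfl, h2⟩)
    · calc a * n + x < a * n + n := by omega
        _ = (a + 1) * n := by ring
        _ ≤ b * n := Nat.mul_le_mul_right n h1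
        _ ≤ b * n + y := Nat.le_add_right _ _
    · omega

/-- Restricting the attacking graph of a Hessenberg function to the monochromatic
edges of an arbitrary coloring `w` again yields (up to relabeling of the vertices)
the incomparability graph of a natural unit interval order, i.e. the graph of a
Hessenberg function. -/
theorem monochromatic_restriction_unit_interval (n : ℕ) (h : Fin n → ℕ)
    (hmono : Monotone h) (hh : ∀ i : Fin n, (i : ℕ) < h i ∧ h i ≤ n)
    (w : Fin n → ℕ) :
    ∃ (ρ : Equiv.Perm (Fin n)) (h' : Fin n → ℕ),
      Monotone h' ∧ (∀ i : Fin n, (i : ℕ) < h' i ∧ h' i ≤ n) ∧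
      ∀ i j : Fin n, i < j →
        (((j : ℕ) < h i ∧ w i = w j) ↔
          ((ρ i < ρ j ∧ (ρ j : ℕ) < h' (ρ i)) ∨ (ρ j < ρ i ∧ (ρ i : ℕ) < h' (ρ j)))) := by
  classical
  -- the sorting key: sort by color, then by index
  set K : Fin n → ℕ := fun i => w i * n + (i : ℕ) with hKdef
  have keylt : ∀ i j : Fin n, K i < K j ↔ (w i < w j ∨ (w i = w j ∧ (i : ℕ) < (j : ℕ))) := by
    intro i j; exact lexKey i.2 j.2
  have Kinj : Function.Injective K := by
    intro i j hij
    by_contra hne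
    have hne' : (i : ℕ) ≠ (j : ℕ) := fun hc => hne (Fin.ext hc)
    have h1 := keylt i j
    have h2 := keylt j i
    omega
  set σ : Equiv.Perm (Fin n) := Tuple.sort K with hσdef
  have hstrict : StrictMono (K ∘ σ) :=
    (Tuple.monotone_sort K).strictMono_of_injective (Kinj.comp σ.injective)
  set ρ : Equiv.Perm (Fin n) := σ⁻¹ with hρdef
  have hρsymm : ∀ i : Fin n, ρ.symm i = σ i := fun i => rfl
  have hσρ : ∀ i : Fin n, σ (ρ i) = i := fun i => σ.apply_symm_apply i
  have rholt : ∀ i j : Fin n, ρ i < ρ j ↔ K i < K j := by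
    intro i j
    have := hstrict.lt_iff_lt (a := ρ i) (b := ρ j)
    simpa [Function.comp, hσρ] using this.symm
  -- edges in the original graph
  set E : Fin n → Fin n → Prop := fun i j => i < j ∧ (j : ℕ) < h i ∧ w i = w j with hEdef
  -- edges transported along ρ
  set Edge : Fin n → Fin n → Prop := fun a b => E (ρ.symm a) (ρ.symm b) ∨ E (ρ.symm b) (ρ.symm a)
    with hEdgedef
  have edge_iff : ∀ a b : Fin n, a < b → (Edge a b ↔ E (ρ.symm a) (ρ.symm b)) := by
    intro a b hab
    constructor
    · rintro (he | he)
      · exact he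
      · exfalso
        obtain ⟨h1, h2, h3⟩ := he
        have : K (ρ.symm b) < K (ρ.symm a) :=
          (keylt _ _).mpr (Or.inr ⟨h3, h1⟩)
        have : ρ (ρ.symm b) < ρ (ρ.symm a) := (rholt _ _).mpr this
        simp only [Equiv.apply_symm_apply] at this
        exact absurd hab (not_lt.mpr this.le)
    · exact Or.inl
  -- if a < b < c and {a,c} is an edge then so is {a,b}
  have closure1 : ∀ a b c : Fin n, a < b → b < c → Edge a c → Edge a b := by
    intro a b c hab hbc hedge
    obtain ⟨h1, h2, h3⟩ := (edge_iff a c (hab.trans hbc)).mp hedge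
    have hKij : K (ρ.symm a) < K (ρ.symm b) :=
      (rholt _ _).mp (by simpa [Equiv.apply_symm_apply] using hab)
    have hKjk : K (ρ.symm b) < K (ρ.symm c) :=
      (rholt _ _).mp (by simpa [Equiv.apply_symm_apply] using hbc)
    have d1 := (keylt (ρ.symm a) (ρ.symm b)).mp hKij
    have d2 := (keylt (ρ.symm b) (ρ.symm c)).mp hKjk
    have hw : w (ρ.symm a) = w (ρ.symm b) ∧ ((ρ.symm a : Fin n) : ℕ) < ((ρ.symm b : Fin n) : ℕ)
        ∧ ((ρ.symm b : Fin n) : ℕ) < ((ρ.symm c : Fin n) : ℕ) := by omega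
    refine (edge_iff a b hab).mpr ⟨Fin.lt_def.mpr hw.2.1, lt_trans hw.2.2 h2, hw.1⟩
  -- if a < a' < b and {a,b} is an edge then so is {a',b}
  have closure2 : ∀ a a' b : Fin n, a < a' → a' < b → Edge a b → Edge a' b := by
    intro a a' b hab hbc hedge
    obtain ⟨h1, h2, h3⟩ := (edge_iff a b (hab.trans hbc)).mp hedge
    have hKij : K (ρ.symm a) < K (ρ.symm a') :=
      (rholt _ _).mp (by simpa [Equiv.apply_symm_apply] using hab)
    have hKjk : K (ρ.symm a') < K (ρ.symm b) :=
      (rholt _ _).mp (by simpa [Equiv.apply_symm_apply] using hbc)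
    have d1 := (keylt (ρ.symm a) (ρ.symm a')).mp hKij
    have d2 := (keylt (ρ.symm a') (ρ.symm b)).mp hKjk
    have hw : w (ρ.symm a) = w (ρ.symm a') ∧ ((ρ.symm a : Fin n) : ℕ) < ((ρ.symm a' : Fin n) : ℕ)
        ∧ ((ρ.symm a' : Fin n) : ℕ) < ((ρ.symm b : Fin n) : ℕ) := by omega
    have hmono' : h (ρ.symm a) ≤ h (ρ.symm a') := hmono (le_of_lt (Fin.lt_def.mpr hw.2.1))
    exact (edge_iff a' b hbc).mpr ⟨Fin.lt_def.mpr hw.2.2, by omega, by omega⟩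
  -- the new Hessenberg-like function
  set h' : Fin n → ℕ := fun a =>
    ((a : ℕ) + 1) ⊔ (Finset.univ.filter (fun b => a < b ∧ Edge a b)).sup (fun b => (b : ℕ) + 1)
    with hh'def
  have h'lb : ∀ a : Fin n, (a : ℕ) < h' a := fun a =>
    lt_of_lt_of_le (Nat.lt_succ_self _) le_sup_left
  have h'ub : ∀ a : Fin n, h' a ≤ n := by
    intro a
    refine sup_le a.2 (Finset.sup_le ?_)
    intro b _
    exact b.2
  have h'edge : ∀ a b : Fin n, a < b → (Edge a b ↔ (b : ℕ) < h' a) := by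
    intro a b hab
    constructor
    · intro he
      have hb : b ∈ Finset.univ.filter (fun b => a < b ∧ Edge a b) := by
        simp [hab, he]
      have := Finset.le_sup (f := fun b : Fin n => (b : ℕ) + 1) hb
      calc (b : ℕ) < (b : ℕ) + 1 := Nat.lt_succ_self _
        _ ≤ _ := le_trans this le_sup_right
    · intro hlt
      by_contra hne
      have hsle : h' a ≤ (b : ℕ) := by
        refine sup_le (by exact_mod_cast Fin.lt_def.mp hab) (Finset.sup_le ?_)
        intro c hc
        simp only [Finset.mem_filter, Finset.mem_univ, true_and] at hc
        obtain ⟨hac, hec⟩ := hc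
        rcases lt_trichotomy c b with h1 | h1 | h1
        · exact Nat.succ_le_of_lt (Fin.lt_def.mp h1)
        · exact absurd (h1 ▸ hec) hne
        · exact absurd (closure1 a b c hab h1 hec) hne
      omega
  have h'mono : Monotone h' := by
    intro a a' haa'
    rcases eq_or_lt_of_le haa' with rfl | hlt
    · exact le_rfl
    have ha1 : (a : ℕ) + 1 ≤ h' a' := by
      have h1 : (a : ℕ) < (a' : ℕ) := Fin.lt_def.mp hlt
      have h2 : (a' : ℕ) + 1 ≤ h' a' := Nat.succ_le_of_lt (h'lb a')
      omega
    refine sup_le ha1 (Finset.sup_le ?_)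
    intro c hc
    simp only [Finset.mem_filter, Finset.mem_univ, true_and] at hc
    obtain ⟨hac, hec⟩ := hc
    rcases le_or_gt c a' with h1 | h1
    · have h2 := Fin.le_def.mp h1
      have h3 : (a' : ℕ) + 1 ≤ h' a' := Nat.succ_le_of_lt (h'lb a')
      omega
    · exact Nat.succ_le_of_lt ((h'edge a' c h1).mp (closure2 a a' c hlt h1 hec))
  refine ⟨ρ, h', h'mono, fun i => ⟨h'lb i, h'ub i⟩, ?_⟩
  intro i j hij
  constructor
  · rintro ⟨hjh, hw⟩
    have hK : K i < K j := (keylt i j).mpr (Or.inr ⟨hw, Fin.lt_def.mp hij⟩)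
    have hρ : ρ i < ρ j := (rholt i j).mpr hK
    left
    refine ⟨hρ, (h'edge _ _ hρ).mp ?_⟩
    left
    simp only [Equiv.symm_apply_apply]
    exact ⟨hij, hjh, hw⟩
  · rintro (⟨h1, h2⟩ | ⟨h1, h2⟩)
    · have he := (h'edge _ _ h1).mpr h2
      rcases he with he | he <;> simp only [Equiv.symm_apply_apply] at he
      · exact ⟨he.2.1, he.2.2⟩
      · exact absurd he.1 (not_lt.mpr hij.le)
    · have he := (h'edge _ _ h1).mpr h2
      rcases he with he | he <;> simp only [Equiv.symm_apply_apply] at he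
      · exact absurd he.1 (not_lt.mpr hij.le)
      · exact ⟨he.2.1, he.2.2⟩
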